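/- For every t ∈ ℂ with t ≠ z_i for all i and t ≠ w_j for all j one has the partial-fraction expansion (1/2)·B(u(t), u(t)) = Σ_{i=1}^N (1/2)·B(λ_i, λ_i)·(t − z_i)^{−2} + Σ_{j=1}^m (1/2)·B(α_j, α_j)·(t − w_j)^{−2} + Σ_{i=1}^N F_i·(t − z_i)^{−1} + Σ_{j=1}^m G_j·(t − w_j)^{−1}. (This is the intermediate identity in the proof of Theorem 4.4, expressing the quadratic form of the Miura connection coefficient with residues given by the partial derivatives ∂Φ/∂z_i = F_i and ∂Φ/∂w_j = G_j of the master function.) -/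

import Mathlib

open Finset

/-- key partial fraction identity -/
lemma pf_key (t a b : ℂ) (ha : t ≠ a) (hb : t ≠ b) (hab : a ≠ b) :
    (t - a)⁻¹ * (t - b)⁻¹ = (a - b)⁻¹ * (t - a)⁻¹ - (a - b)⁻¹ * (t - b)⁻¹ := by
  have h1 : t - a ≠ 0 := sub_ne_zero.mpr ha
  have h2 : t - b ≠ 0 := sub_ne_zero.mpr hb
  have h3 : a - b ≠ 0 := sub_ne_zero.mpr hab
  field_simp
  ring

/-- swap indices in a double sum over offdiagonal pairs -/
lemma swap_offdiag {n : ℕ} (g : Fin n → Fin n → ℂ) :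
    ∑ i, ∑ k ∈ univ.erase i, g i k = ∑ i, ∑ k ∈ univ.erase i, g k i := by
  have h : ∀ h : Fin n → Fin n → ℂ,
      (∑ i, ∑ k ∈ univ.erase i, h i k) = ∑ i, ∑ k, if k ≠ i then h i k else 0 := by
    intro h
    refine Finset.sum_congr rfl fun i _ => ?_
    rw [show univ.erase i = univ.filter (· ≠ i) by ext; simp [Finset.mem_erase], Finset.sum_filter]
  rw [h g, h (fun i k => g k i), Finset.sum_comm]
  refine Finset.sum_congr rfl fun i _ => Finset.sum_congr rfl fun k _ => ?_
  simp [ne_comm]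

lemma sumA {n : ℕ} (t : ℂ) (x : Fin n → ℂ) (hx : Function.Injective x)
    (hT : ∀ i, t ≠ x i) (a : Fin n → Fin n → ℂ) (hsym : ∀ i k, a i k = a k i) :
    ∑ i, ∑ k, (t - x i)⁻¹ * (t - x k)⁻¹ * a i k
      = ∑ i, a i i * ((t - x i) ^ 2)⁻¹
        + 2 * ∑ i, (∑ k ∈ univ.erase i, a i k / (x i - x k)) * (t - x i)⁻¹ := by
  have hsplit : ∀ i : Fin n, ∑ k, (t - x i)⁻¹ * (t - x k)⁻¹ * a i k
      = a i i * ((t - x i) ^ 2)⁻¹ + ∑ k ∈ univ.erase i, (t - x i)⁻¹ * (t - x k)⁻¹ * a i k := by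
    intro i
    rw [← Finset.add_sum_erase univ _ (mem_univ i)]
    congr 1
    rw [sq, mul_inv]
    ring
  rw [Finset.sum_congr rfl fun i _ => hsplit i, Finset.sum_add_distrib]
  congr 1
  -- off-diagonal part
  have hterm : ∀ i : Fin n, ∀ k ∈ univ.erase i,
      (t - x i)⁻¹ * (t - x k)⁻¹ * a i k
        = a i k / (x i - x k) * (t - x i)⁻¹ - a i k / (x i - x k) * (t - x k)⁻¹ := by
    intro i k hk
    have hik : x i ≠ x k := fun h => (Finset.mem_erase.mp hk).1 (hx h).symm
    rw [pf_key t (x i) (x k) (hT i) (hT k) hik]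
    ring
  rw [Finset.sum_congr rfl fun i _ => Finset.sum_congr rfl (hterm i)]
  rw [Finset.sum_congr rfl fun i _ => Finset.sum_sub_distrib _ _]
  rw [Finset.sum_sub_distrib]
  have h2 : (∑ i, ∑ k ∈ univ.erase i, a i k / (x i - x k) * (t - x k)⁻¹)
      = -∑ i, ∑ k ∈ univ.erase i, a i k / (x i - x k) * (t - x i)⁻¹ := by
    rw [swap_offdiag]
    rw [← Finset.sum_neg_distrib]
    refine Finset.sum_congr rfl fun i _ => ?_
    rw [← Finset.sum_neg_distrib]
    refine Finset.sum_congr rfl fun k hk => ?_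
    have hik : x k ≠ x i := fun h => (Finset.mem_erase.mp hk).1 (hx h)
    rw [hsym k i]
    have : x k - x i = -(x i - x k) := by ring
    rw [this, div_neg]
    ring
  rw [h2]
  rw [sub_neg_eq_add]
  symm
  have hr : ∀ i : Fin n, 2 * ((∑ k ∈ univ.erase i, a i k / (x i - x k)) * (t - x i)⁻¹)
      = (∑ k ∈ univ.erase i, a i k / (x i - x k) * (t - x i)⁻¹)
        + ∑ k ∈ univ.erase i, a i k / (x i - x k) * (t - x i)⁻¹ := by
    intro i; rw [Finset.sum_mul]; ring
  rw [Finset.mul_sum, Finset.sum_congr rfl fun i _ => hr i, Finset.sum_add_distrib]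

lemma sumB {n p : ℕ} (t : ℂ) (x : Fin n → ℂ) (y : Fin p → ℂ)
    (hxy : ∀ i j, x i ≠ y j) (hTx : ∀ i, t ≠ x i) (hTy : ∀ j, t ≠ y j)
    (b : Fin n → Fin p → ℂ) :
    ∑ i, ∑ j, (t - x i)⁻¹ * (t - y j)⁻¹ * b i j
      = ∑ i, (∑ j, b i j / (x i - y j)) * (t - x i)⁻¹
        + ∑ j, (∑ i, b i j / (y j - x i)) * (t - y j)⁻¹ := by
  have hterm : ∀ (i : Fin n) (j : Fin p),
      (t - x i)⁻¹ * (t - y j)⁻¹ * b i j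
        = b i j / (x i - y j) * (t - x i)⁻¹ + b i j / (y j - x i) * (t - y j)⁻¹ := by
    intro i j
    rw [pf_key t (x i) (y j) (hTx i) (hTy j) (hxy i j)]
    have hyx : y j - x i = -(x i - y j) := by ring
    rw [hyx, div_neg]
    ring
  calc ∑ i, ∑ j, (t - x i)⁻¹ * (t - y j)⁻¹ * b i j
      = ∑ i, ∑ j, (b i j / (x i - y j) * (t - x i)⁻¹ + b i j / (y j - x i) * (t - y j)⁻¹) := by
        exact Finset.sum_congr rfl fun i _ => Finset.sum_congr rfl fun j _ => hterm i j
    _ = ∑ i, ((∑ j, b i j / (x i - y j) * (t - x i)⁻¹) + ∑ j, b i j / (y j - x i) * (t - y j)⁻¹) := by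
        exact Finset.sum_congr rfl fun i _ => Finset.sum_add_distrib
    _ = (∑ i, ∑ j, b i j / (x i - y j) * (t - x i)⁻¹)
          + ∑ i, ∑ j, b i j / (y j - x i) * (t - y j)⁻¹ := Finset.sum_add_distrib
    _ = ∑ i, (∑ j, b i j / (x i - y j)) * (t - x i)⁻¹
          + ∑ j, (∑ i, b i j / (y j - x i)) * (t - y j)⁻¹ := by
        congr 1
        · exact Finset.sum_congr rfl fun i _ => (Finset.sum_mul _ _ _).symm
        · rw [Finset.sum_comm]
          exact Finset.sum_congr rfl fun j _ => (Finset.sum_mul _ _ _).symm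

lemma bil_expand {V : Type*} [AddCommGroup V] [Module ℂ V]
    (B : V →ₗ[ℂ] V →ₗ[ℂ] ℂ) {n p : ℕ} (c : Fin n → ℂ) (d : Fin p → ℂ)
    (v : Fin n → V) (y : Fin p → V) :
    B (∑ i, c i • v i) (∑ j, d j • y j) = ∑ i, ∑ j, c i * d j * B (v i) (y j) := by
  rw [map_sum B, LinearMap.sum_apply]
  refine Finset.sum_congr rfl fun i _ => ?_
  rw [map_smul, LinearMap.smul_apply, map_sum, smul_eq_mul, Finset.mul_sum]
  refine Finset.sum_congr rfl fun j _ => ?_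
  rw [map_smul, smul_eq_mul]
  ring

/-- The intermediate partial-fraction identity in the proof of
Theorem 4.4, expressing the quadratic form `½·B(u(t),u(t))` of the Miura
connection coefficient with residues given by the partial derivatives
`∂Φ/∂z_i = F_i` and `∂Φ/∂w_j = G_j` of the master function. -/
theorem statement8 {V : Type*} [AddCommGroup V] [Module ℂ V]
    (B : V →ₗ[ℂ] V →ₗ[ℂ] ℂ) (hBsymm : ∀ x y, B x y = B y x)
    (N m : ℕ) (lam : Fin N → V) (alp : Fin m → V)
    (z : Fin N → ℂ) (w : Fin m → ℂ)
    (hz : Function.Injective z) (hw : Function.Injective w)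
    (hzw : ∀ i j, z i ≠ w j)
    (u : ℂ → V)
    (hu : ∀ t, u t = -∑ i, (t - z i)⁻¹ • lam i + ∑ j, (t - w j)⁻¹ • alp j)
    (F : Fin N → ℂ)
    (hF : ∀ i, F i = ∑ k ∈ univ.erase i, B (lam i) (lam k) / (z i - z k)
        - ∑ j, B (lam i) (alp j) / (z i - w j))
    (G : Fin m → ℂ)
    (hG : ∀ j, G j = -∑ i, B (lam i) (alp j) / (w j - z i)
        + ∑ k ∈ univ.erase j, B (alp k) (alp j) / (w j - w k)) :
    ∀ t : ℂ, (∀ i, t ≠ z i) → (∀ j, t ≠ w j) →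
      (1/2 : ℂ) * B (u t) (u t)
        = ∑ i, (1/2 : ℂ) * B (lam i) (lam i) * ((t - z i) ^ 2)⁻¹
          + ∑ j, (1/2 : ℂ) * B (alp j) (alp j) * ((t - w j) ^ 2)⁻¹
          + ∑ i, F i * (t - z i)⁻¹
          + ∑ j, G j * (t - w j)⁻¹ := by
  intro t htz htw
  have hXX := sumA t z hz htz (fun i k => B (lam i) (lam k)) (fun i k => hBsymm _ _)
  have hYY := sumA t w hw htw (fun j k => B (alp j) (alp k)) (fun i k => hBsymm _ _)
  have hXY := sumB t z w hzw htz htw (fun i j => B (lam i) (alp j))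
  -- expansion of the quadratic form
  have hYX : (∑ j, ∑ i, (t - w j)⁻¹ * (t - z i)⁻¹ * B (alp j) (lam i))
      = ∑ i, ∑ j, (t - z i)⁻¹ * (t - w j)⁻¹ * B (lam i) (alp j) := by
    rw [Finset.sum_comm]
    refine Finset.sum_congr rfl fun i _ => Finset.sum_congr rfl fun j _ => ?_
    rw [hBsymm (alp j) (lam i)]
    ring
  have hexp : B (u t) (u t)
      = (∑ i, ∑ k, (t - z i)⁻¹ * (t - z k)⁻¹ * B (lam i) (lam k))
        - (∑ i, ∑ j, (t - z i)⁻¹ * (t - w j)⁻¹ * B (lam i) (alp j))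
        - (∑ i, ∑ j, (t - z i)⁻¹ * (t - w j)⁻¹ * B (lam i) (alp j))
        + (∑ j, ∑ k, (t - w j)⁻¹ * (t - w k)⁻¹ * B (alp j) (alp k)) := by
    rw [hu t]
    simp only [map_add, map_neg, LinearMap.add_apply, LinearMap.neg_apply, bil_expand]
    rw [hYX]
    ring
  -- rewriting the RHS coefficient sums
  have hFsum : ∑ i, F i * (t - z i)⁻¹
      = (∑ i, (∑ k ∈ univ.erase i, B (lam i) (lam k) / (z i - z k)) * (t - z i)⁻¹)
        - ∑ i, (∑ j, B (lam i) (alp j) / (z i - w j)) * (t - z i)⁻¹ := by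
    simp only [hF, sub_mul]
    rw [Finset.sum_sub_distrib]
  have hGsum : ∑ j, G j * (t - w j)⁻¹
      = -(∑ j, (∑ i, B (lam i) (alp j) / (w j - z i)) * (t - w j)⁻¹)
        + ∑ j, (∑ k ∈ univ.erase j, B (alp j) (alp k) / (w j - w k)) * (t - w j)⁻¹ := by
    simp only [hG, add_mul, neg_mul]
    rw [Finset.sum_add_distrib, Finset.sum_neg_distrib]
    congr 1
    refine Finset.sum_congr rfl fun j _ => ?_
    congr 1
    exact Finset.sum_congr rfl fun k _ => by rw [hBsymm (alp k) (alp j)]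
  have hD1 : ∑ i, (1/2 : ℂ) * B (lam i) (lam i) * ((t - z i) ^ 2)⁻¹
      = (1/2 : ℂ) * ∑ i, B (lam i) (lam i) * ((t - z i) ^ 2)⁻¹ := by
    rw [Finset.mul_sum]
    exact Finset.sum_congr rfl fun i _ => by ring
  have hD2 : ∑ j, (1/2 : ℂ) * B (alp j) (alp j) * ((t - w j) ^ 2)⁻¹
      = (1/2 : ℂ) * ∑ j, B (alp j) (alp j) * ((t - w j) ^ 2)⁻¹ := by
    rw [Finset.mul_sum]
    exact Finset.sum_congr rfl fun j _ => by ring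
  rw [hD1, hD2, hFsum, hGsum, hexp, hXX, hYY, hXY]
  ring
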